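/- (Corollary 2, AC part.) Let γ_{D^t,D^r}, γ_{A,D^r} > 0 with γ_{A,D^r} ≠ γ_{D^t,D^r}, let p ∈ [0,1] and β ∈ [0,1]. Under the one-CUE/one-D2D-pair random model below, E[R] = (1/ln 2)( p·( Ψ(1/γ_{D^t,D^r}) − Ψ(1/γ_{A,D^r}) ) / ( γ_{A,D^r}/γ_{D^t,D^r} − 1 ) − (1−p)(1−β)·Ψ(1/γ_{D^t,D^r}) ). -/

import Mathlib

open MeasureTheory ProbabilityTheory

/-- `Psi x = eˣ Ei(-x) = -∫_0^∞ e^{-u}/(u+x) du`. -/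
noncomputable def Psi (x : ℝ) : ℝ := -∫ u in Set.Ioi (0 : ℝ), Real.exp (-u) / (u + x)

/-- Index type for the three independent random objects: the mode `M`, the D2D link SNR `X`
and the CUE interference SNR `Z`. -/
inductive IdxD where
  | M : IdxD
  | X : IdxD
  | Z : IdxD

/-- Codomain of each of the three random objects. -/
def IdxDT : IdxD → Type
  | .M => Bool
  | .X => ℝ
  | .Z => ℝ

instance (i : IdxD) : MeasurableSpace (IdxDT i) := by
  cases i <;> dsimp only [IdxDT] <;> infer_instance

/-- The family of the three random objects. -/
def idxDFam {Ω : Type*} (M : Ω → Bool) (X Z : Ω → ℝ) : (i : IdxD) → Ω → IdxDT i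
  | .M => M
  | .X => X
  | .Z => Z

open MeasureTheory ProbabilityTheory Real Set Filter Topology
open scoped ENNReal NNReal

namespace Stmt7Aux

/-- `Eb b = ∫_0^∞ e^{-u}/(u+b) du`. -/
noncomputable def Eb (b : ℝ) : ℝ := ∫ u in Set.Ioi (0:ℝ), Real.exp (-u) / (u + b)

lemma integrableOn_of_bound {f : ℝ → ℝ} (hm : Measurable f) (K : ℝ) {d : ℝ} (hd : 0 < d)
    (hb : ∀ x ∈ Ioi (0:ℝ), ‖f x‖ ≤ K * Real.exp (-(d * x))) :
    IntegrableOn f (Ioi (0:ℝ)) := by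
  have hint : IntegrableOn (fun x => K * Real.exp (-(d * x))) (Ioi (0:ℝ)) := by
    have := (exp_neg_integrableOn_Ioi 0 hd).const_mul K
    simp only [neg_mul] at this; exact this
  exact hint.mono' hm.aestronglyMeasurable
    ((ae_restrict_iff' measurableSet_Ioi).2 (ae_of_all _ hb))

lemma Eb_integrableOn {b : ℝ} (hb : 0 < b) :
    IntegrableOn (fun u => Real.exp (-u) / (u + b)) (Ioi (0:ℝ)) := by
  refine integrableOn_of_bound (by fun_prop) b⁻¹ one_pos (fun x hx => ?_)
  have hx0 : (0:ℝ) < x := hx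
  have h1 : (0:ℝ) < x + b := by linarith
  rw [Real.norm_eq_abs, abs_of_nonneg (by positivity)]
  calc Real.exp (-x) / (x + b) ≤ Real.exp (-x) / b := by gcongr; linarith
    _ = b⁻¹ * Real.exp (-(1*x)) := by rw [one_mul]; ring

lemma sub_scaled {a b : ℝ} (ha : 0 < a) (hb : 0 < b) :
    ∫ t in Ioi (0:ℝ), a * Real.exp (-(a*t)) / (b + a*t) = Eb b := by
  have h := integral_comp_mul_left_Ioi (fun u => a * Real.exp (-u) / (b + u)) 0 ha
  simp only [mul_zero, smul_eq_mul] at h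
  rw [h]
  have h2 : ∫ u in Ioi (0:ℝ), a * Real.exp (-u) / (b + u)
      = a * ∫ u in Ioi (0:ℝ), Real.exp (-u) / (b + u) := by
    rw [← integral_const_mul]
    congr 1; ext u; ring
  rw [h2, ← mul_assoc, inv_mul_cancel₀ ha.ne', one_mul]
  unfold Eb
  congr 1
  ext u
  rw [add_comm b u]

lemma exp_div_integrableOn {c : ℝ} (hc : 0 < c) :
    IntegrableOn (fun t => Real.exp (-(c*t)) / (1 + t)) (Ioi (0:ℝ)) := by
  refine integrableOn_of_bound (by fun_prop) 1 hc (fun x hx => ?_)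
  have hx0 : (0:ℝ) < x := hx
  have h1 : (1:ℝ) ≤ 1 + x := by linarith
  rw [Real.norm_eq_abs, abs_of_nonneg (by positivity), one_mul]
  calc Real.exp (-(c*x)) / (1 + x) ≤ Real.exp (-(c*x)) / 1 := by gcongr
    _ = Real.exp (-(c*x)) := div_one _

lemma scaled_integrableOn {a b : ℝ} (ha : 0 < a) (hb : 0 < b) :
    IntegrableOn (fun t => a * Real.exp (-(a*t)) / (b + a*t)) (Ioi (0:ℝ)) := by
  refine integrableOn_of_bound (by fun_prop) (a/b) ha (fun x hx => ?_)
  have hx0 : (0:ℝ) < x := hx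
  have h1 : (0:ℝ) < b + a*x := by positivity
  rw [Real.norm_eq_abs, abs_of_nonneg (by positivity)]
  calc a * Real.exp (-(a*x)) / (b + a*x) ≤ a * Real.exp (-(a*x)) / b := by
        gcongr; linarith [mul_pos ha hx0]
    _ = a/b * Real.exp (-(a*x)) := by ring

lemma H_eq {a : ℝ} (ha : 0 < a) :
    ∫ t in Ioi (0:ℝ), Real.exp (-(a*t)) / (1 + t) = Eb a := by
  rw [← sub_scaled ha ha]
  apply setIntegral_congr_fun measurableSet_Ioi
  intro t ht
  have h1 : (0:ℝ) < 1 + t := by have : (0:ℝ) < t := ht; linarith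
  show Real.exp (-(a*t)) / (1 + t) = a * Real.exp (-(a*t)) / (a + a*t)
  rw [show a + a * t = a * (1 + t) by ring, mul_div_mul_left _ _ ha.ne']

lemma exp_int_eq {c : ℝ} (hc : 0 < c) :
    ∫ z in Ioi (0:ℝ), Real.exp (-(c*z)) = 1/c := by
  have h := integral_comp_mul_left_Ioi (fun u => Real.exp (-u)) 0 hc
  simp only [mul_zero, smul_eq_mul] at h
  rw [h, integral_exp_neg_Ioi, neg_zero, Real.exp_zero, mul_one, one_div]

lemma exp_integrableOn {c : ℝ} (hc : 0 < c) :
    IntegrableOn (fun z => Real.exp (-(c*z))) (Ioi (0:ℝ)) := by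
  have := exp_neg_integrableOn_Ioi 0 hc
  simpa [neg_mul] using this

lemma mul_exp_le {d x : ℝ} (hd : 0 < d) (hx : 0 ≤ x) : x * Real.exp (-(d*x)) ≤ 1/d := by
  have h1 : d * x ≤ Real.exp (d*x) := by
    have := Real.add_one_le_exp (d*x); linarith
  have h2 : x ≤ Real.exp (d*x) / d := by
    rw [le_div_iff₀ hd]; linarith [h1]
  calc x * Real.exp (-(d*x)) ≤ (Real.exp (d*x)/d) * Real.exp (-(d*x)) := by
        apply mul_le_mul_of_nonneg_right h2 (Real.exp_nonneg _)
    _ = 1/d := by rw [div_mul_eq_mul_div, ← Real.exp_add, add_neg_cancel, Real.exp_zero]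

lemma log_measurable {c s : ℝ} :
    Measurable (fun x : ℝ => Real.log (1 + x/s) * (c * Real.exp (-(c*x)))) := by
  apply Measurable.mul
  · exact Real.measurable_log.comp (measurable_const.add (measurable_id.div_const s))
  · fun_prop

lemma log_bound {s x : ℝ} (hs : 0 < s) (hx : 0 ≤ x) :
    0 ≤ Real.log (1 + x/s) ∧ Real.log (1 + x/s) ≤ x/s := by
  have h0 : 0 ≤ x/s := div_nonneg hx hs.le
  constructor
  · exact Real.log_nonneg (by linarith)
  · have := Real.log_le_sub_one_of_pos (show (0:ℝ) < 1 + x/s by linarith)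
    linarith

lemma log_integrableOn {c s : ℝ} (hc : 0 < c) (hs : 0 < s) :
    IntegrableOn (fun x => Real.log (1 + x/s) * (c * Real.exp (-(c*x)))) (Ioi (0:ℝ)) := by
  refine integrableOn_of_bound log_measurable (2/s) (half_pos hc) (fun x hx => ?_)
  have hx0 : (0:ℝ) < x := hx
  obtain ⟨hl0, hl1⟩ := log_bound hs hx0.le
  have key : x * Real.exp (-(c/2*x)) ≤ 2/c := by
    have h := mul_exp_le (half_pos hc) hx0.le
    calc x * Real.exp (-(c/2*x)) ≤ 1/(c/2) := h
      _ = 2/c := by rw [one_div_div]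
  have e1 : Real.exp (-(c*x)) = Real.exp (-(c/2*x)) * Real.exp (-(c/2*x)) := by
    rw [← Real.exp_add]; ring_nf
  rw [Real.norm_eq_abs, abs_of_nonneg (by positivity)]
  calc Real.log (1 + x/s) * (c * Real.exp (-(c*x)))
      ≤ (x/s) * (c * Real.exp (-(c*x))) := by
        apply mul_le_mul_of_nonneg_right hl1 (by positivity)
    _ = (c/s) * (x * Real.exp (-(c/2*x))) * Real.exp (-(c/2*x)) := by rw [e1]; ring
    _ ≤ (c/s) * (2/c) * Real.exp (-(c/2*x)) := by
        have hcs : (0:ℝ) ≤ c/s := by positivity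
        apply mul_le_mul_of_nonneg_right _ (Real.exp_nonneg _)
        exact mul_le_mul_of_nonneg_left key hcs
    _ = 2/s * Real.exp (-(c/2*x)) := by
        have : c/s * (2/c) = 2/s := by field_simp
        rw [this]

lemma log_exp_eq {c : ℝ} (hc : 0 < c) :
    ∫ t in Ioi (0:ℝ), Real.log (1+t) * (c * Real.exp (-(c*t)))
      = ∫ t in Ioi (0:ℝ), Real.exp (-(c*t)) / (1+t) := by
  have h2 : IntegrableOn (fun t => Real.log (1+t) * (c * Real.exp (-(c*t)))) (Ioi (0:ℝ)) := by
    have := log_integrableOn hc one_pos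
    simpa using this
  have h1 : IntegrableOn (fun t => Real.exp (-(c*t)) / (1+t)) (Ioi (0:ℝ)) := exp_div_integrableOn hc
  have hderiv : ∀ t ∈ Ioi (0:ℝ),
      HasDerivAt (fun t => -Real.exp (-(c*t)) * Real.log (1+t))
        (Real.log (1+t) * (c * Real.exp (-(c*t))) - Real.exp (-(c*t)) / (1+t)) t := by
    intro t ht
    have ht0 : (0:ℝ) < t := ht
    have h1t : (1:ℝ) + t ≠ 0 := by linarith
    have he : HasDerivAt (fun t : ℝ => -Real.exp (-(c*t))) (c * Real.exp (-(c*t))) t := by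
      have h0 := (((hasDerivAt_id t).const_mul (-c)).exp).neg
      have e1 : (-fun x : ℝ => Real.exp (-c * id x)) = (fun x : ℝ => -Real.exp (-(c*x))) := by
        ext x; rw [Pi.neg_apply, id, neg_mul]
      have e2 : -(Real.exp (-c * id t) * (-c * 1)) = c * Real.exp (-(c*t)) := by
        rw [id, neg_mul]; ring
      rw [e1, e2] at h0
      exact h0
    have hl : HasDerivAt (fun t : ℝ => Real.log (1+t)) (1/(1+t)) t := by
      have := ((hasDerivAt_id t).const_add 1).log h1t
      simpa using this
    have := he.mul hl
    refine HasDerivAt.congr_deriv this ?_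
    ring
  have hcont : ContinuousWithinAt (fun t => -Real.exp (-(c*t)) * Real.log (1+t)) (Ici (0:ℝ)) 0 := by
    apply ContinuousAt.continuousWithinAt
    have : ContinuousAt (fun t : ℝ => Real.log (1+t)) 0 := by
      apply (Real.continuousAt_log (by norm_num)).comp
      fun_prop
    exact (((Real.continuous_exp.comp (continuous_const.mul continuous_id).neg).neg).continuousAt).mul this
  have htends : Tendsto (fun t => -Real.exp (-(c*t)) * Real.log (1+t)) atTop (𝓝 0) := by
    refine squeeze_zero_norm' (a := fun t : ℝ => (1/c) * ((c*t)^1 * Real.exp (-(c*t)))) ?_ ?_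
    · filter_upwards [eventually_ge_atTop (0:ℝ)] with t ht
      obtain ⟨hl0, hl1⟩ := log_bound one_pos ht
      simp only [div_one] at hl0 hl1
      rw [norm_mul, norm_neg, Real.norm_eq_abs, Real.norm_eq_abs,
        abs_of_nonneg (Real.exp_nonneg _), abs_of_nonneg hl0]
      calc Real.exp (-(c*t)) * Real.log (1+t) ≤ Real.exp (-(c*t)) * t := by
            apply mul_le_mul_of_nonneg_left hl1 (Real.exp_nonneg _)
        _ = 1/c * ((c*t)^1 * Real.exp (-(c*t))) := by field_simp
    · have hcomp : Tendsto (fun t : ℝ => c * t) atTop atTop :=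
        Tendsto.const_mul_atTop hc tendsto_id
      have := (tendsto_pow_mul_exp_neg_atTop_nhds_zero 1).comp hcomp
      have h2 := this.const_mul (1/c)
      simpa [Function.comp, neg_mul] using h2
  have key := integral_Ioi_of_hasDerivAt_of_tendsto hcont hderiv (h2.sub h1) htends
  rw [integral_sub h2 h1] at key
  norm_num at key
  linarith [key]

lemma log_scaled {d s : ℝ} (hd : 0 < d) (hs : 0 < s) :
    ∫ x in Ioi (0:ℝ), Real.log (1 + x/s) * (d * Real.exp (-(d*x))) = Eb (d*s) := by
  have h := integral_comp_mul_left_Ioi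
    (fun t => Real.log (1+t) * (d * Real.exp (-(d*s*t)))) 0 (inv_pos.2 hs)
  simp only [mul_zero, smul_eq_mul, inv_inv] at h
  have hL : (∫ x in Ioi (0:ℝ), Real.log (1 + s⁻¹*x) * (d * Real.exp (-(d*s*(s⁻¹*x)))))
      = ∫ x in Ioi (0:ℝ), Real.log (1 + x/s) * (d * Real.exp (-(d*x))) := by
    congr 1; ext x
    rw [show d*s*(s⁻¹*x) = d*x by field_simp, div_eq_inv_mul]
  rw [hL] at h
  rw [h]
  have hds : 0 < d*s := mul_pos hd hs
  have h2 : (∫ t in Ioi (0:ℝ), Real.log (1+t) * (d * Real.exp (-(d*s*t))))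
      = s⁻¹ * ∫ t in Ioi (0:ℝ), Real.log (1+t) * ((d*s) * Real.exp (-(d*s*t))) := by
    rw [← integral_const_mul]
    congr 1; ext t
    field_simp
  rw [h2, ← mul_assoc, mul_inv_cancel₀ (by positivity : s ≠ (0:ℝ)), one_mul]
  have h3 := log_exp_eq hds
  have h4 : (∫ t in Ioi (0:ℝ), Real.log (1 + t/1) * ((d*s) * Real.exp (-(d*s*t))))
      = ∫ t in Ioi (0:ℝ), Real.log (1+t) * ((d*s) * Real.exp (-(d*s*t))) := by
    congr 1; ext t; rw [div_one]
  rw [h3, H_eq hds]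

lemma final_real {lD lA : ℝ} (hD : 0 < lD) (hA : 0 < lA) (hne : lA ≠ lD) :
    ∫ t in Ioi (0:ℝ), lA * Real.exp (-(lD*t)) / ((1+t)*(lA+lD*t))
      = lA / (lA - lD) * (Eb lD - Eb lA) := by
  have hsub : lA - lD ≠ 0 := sub_ne_zero.2 hne
  have key : ∀ t ∈ Ioi (0:ℝ), lA * Real.exp (-(lD*t)) / ((1+t)*(lA+lD*t))
      = lA/(lA-lD) * (Real.exp (-(lD*t))/(1+t))
        - lA/(lA-lD) * (lD * Real.exp (-(lD*t))/(lA+lD*t)) := by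
    intro t ht
    have ht0 : (0:ℝ) < t := ht
    have h1 : (1:ℝ)+t ≠ 0 := by linarith
    have h2 : lA+lD*t ≠ 0 := by positivity
    field_simp
    ring
  rw [setIntegral_congr_fun measurableSet_Ioi key]
  rw [integral_sub ((exp_div_integrableOn hD).const_mul _) ((scaled_integrableOn hD hA).const_mul _),
    integral_const_mul, integral_const_mul, H_eq hD, sub_scaled hD hA]
  ring

lemma final_integrableOn {lD lA : ℝ} (hD : 0 < lD) (hA : 0 < lA) :
    IntegrableOn (fun t => lA * Real.exp (-(lD*t)) / ((1+t)*(lA+lD*t))) (Ioi (0:ℝ)) := by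
  refine integrableOn_of_bound (by fun_prop) 1 hD (fun x hx => ?_)
  have hx0 : (0:ℝ) < x := hx
  have h1 : (1:ℝ) ≤ 1+x := by linarith
  have h2 : lA ≤ lA + lD*x := by nlinarith
  have h3 : (0:ℝ) < (1+x)*(lA+lD*x) := by nlinarith
  rw [Real.norm_eq_abs, abs_of_nonneg (by positivity), one_mul]
  rw [div_le_iff₀ h3]
  calc lA * Real.exp (-(lD*x)) = Real.exp (-(lD*x)) * (1 * lA) := by ring
    _ ≤ Real.exp (-(lD*x)) * ((1+x)*(lA+lD*x)) := by
        apply mul_le_mul_of_nonneg_left _ (Real.exp_nonneg _)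
        apply mul_le_mul h1 h2 hA.le (by linarith)
    _ = Real.exp (-(lD*x)) * ((1+x)*(lA+lD*x)) := rfl

/-! ### Measure-theoretic glue for `expMeasure` -/

lemma ae_ne_zero : ∀ᵐ (x:ℝ) ∂(volume : Measure ℝ), x ≠ 0 := by
  rw [ae_iff]
  have : {x : ℝ | ¬ x ≠ 0} = {0} := by ext x; simp
  rw [this]
  exact measure_singleton 0

lemma measurable_gammaPDF (a r : ℝ) : Measurable (gammaPDF a r) := by
  unfold gammaPDF
  exact (measurable_gammaPDFReal a r).ennreal_ofReal

lemma lintegral_expMeasure {r : ℝ} {f : ℝ → ℝ≥0∞} (hf : Measurable f) :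
    ∫⁻ x, f x ∂(expMeasure r)
      = ∫⁻ x in Ioi (0:ℝ), f x * ENNReal.ofReal (r * Real.exp (-(r*x))) := by
  rw [expMeasure, gammaMeasure,
    lintegral_withDensity_eq_lintegral_mul _ (measurable_gammaPDF 1 r) hf]
  have hae : (fun x => (gammaPDF 1 r * f) x)
      =ᵐ[(volume : Measure ℝ)] (Ioi (0:ℝ)).indicator
        (fun x => f x * ENNReal.ofReal (r * Real.exp (-(r*x)))) := by
    filter_upwards [ae_ne_zero] with x hx
    rcases lt_or_gt_of_ne hx with hneg | hpos
    · rw [Pi.mul_apply, gammaPDF_of_neg hneg, zero_mul,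
        Set.indicator_of_notMem (by simpa using not_lt.2 hneg.le)]
    · rw [Set.indicator_of_mem (Set.mem_Ioi.2 hpos), Pi.mul_apply,
        show gammaPDF 1 r x = exponentialPDF r x from rfl,
        exponentialPDF_of_nonneg hpos.le, mul_comm]
  rw [lintegral_congr_ae hae, lintegral_indicator measurableSet_Ioi]

lemma expMeasure_compl_Ioi (r : ℝ) : expMeasure r (Ioi (0:ℝ))ᶜ = 0 := by
  rw [compl_Ioi, expMeasure, gammaMeasure, withDensity_apply _ measurableSet_Iic]
  have h : ∀ᵐ x ∂((volume : Measure ℝ).restrict (Iic (0:ℝ))), gammaPDF 1 r x = 0 := by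
    rw [ae_restrict_iff' measurableSet_Iic]
    filter_upwards [ae_ne_zero] with x hx hxm
    exact gammaPDF_of_neg (lt_of_le_of_ne hxm hx)
  rw [lintegral_congr_ae h, lintegral_zero]

lemma lintegral_ofReal_expMeasure {r : ℝ} (hr : 0 < r) {h : ℝ → ℝ} (hm : Measurable h)
    (hnn : ∀ x ∈ Ioi (0:ℝ), 0 ≤ h x)
    (hint : IntegrableOn (fun x => h x * (r * Real.exp (-(r*x)))) (Ioi (0:ℝ))) :
    ∫⁻ x, ENNReal.ofReal (h x) ∂(expMeasure r)
      = ENNReal.ofReal (∫ x in Ioi (0:ℝ), h x * (r * Real.exp (-(r*x)))) := by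
  rw [lintegral_expMeasure hm.ennreal_ofReal]
  rw [ofReal_integral_eq_lintegral_ofReal hint
    ((ae_restrict_iff' measurableSet_Ioi).2 (ae_of_all _
      (fun x hx => mul_nonneg (hnn x hx) (by positivity))))]
  apply setLIntegral_congr_fun measurableSet_Ioi
  intro x hx
  dsimp only
  rw [← ENNReal.ofReal_mul (hnn x hx)]

lemma integral_of_lintegral {α : Type*} [MeasurableSpace α] {ν : Measure α} {h : α → ℝ}
    (hm : AEStronglyMeasurable h ν) (hnn : 0 ≤ᵐ[ν] h) {J : ℝ} (hJ : 0 ≤ J)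
    (hL : ∫⁻ x, ENNReal.ofReal (h x) ∂ν = ENNReal.ofReal J) :
    Integrable h ν ∧ ∫ x, h x ∂ν = J := by
  have hfi : HasFiniteIntegral h ν := by
    rw [hasFiniteIntegral_iff_ofReal hnn, hL]
    exact ENNReal.ofReal_lt_top
  refine ⟨⟨hm, hfi⟩, ?_⟩
  rw [integral_eq_lintegral_of_nonneg_ae hnn hm, hL, ENNReal.toReal_ofReal hJ]

/-! ### The two expectations -/

lemma Eb_nonneg {b : ℝ} (hb : 0 < b) : 0 ≤ Eb b := by
  apply setIntegral_nonneg measurableSet_Ioi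
  intro u hu
  have : (0:ℝ) < u := hu
  positivity

lemma ae_nonneg_expMeasure {lD : ℝ} {h : ℝ → ℝ} (hnn : ∀ x ∈ Ioi (0:ℝ), 0 ≤ h x) :
    0 ≤ᵐ[expMeasure lD] h := by
  rw [Filter.EventuallyLE, ae_iff]
  apply measure_mono_null (t := (Ioi (0:ℝ))ᶜ)
  · intro x hx
    simp only [Set.mem_setOf_eq, Pi.zero_apply, not_le] at hx
    intro hmem
    exact absurd (hnn x hmem) (not_le.2 hx)
  · exact expMeasure_compl_Ioi lD

lemma overlay {lD : ℝ} (hD : 0 < lD) :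
    Integrable (fun x => Real.log (1+x)) (expMeasure lD) ∧
    ∫ x, Real.log (1+x) ∂(expMeasure lD) = Eb lD := by
  have hm : Measurable (fun x : ℝ => Real.log (1+x)) :=
    Real.measurable_log.comp (measurable_const.add measurable_id)
  have hnn : ∀ x ∈ Ioi (0:ℝ), 0 ≤ Real.log (1+x) := by
    intro x hx
    have := (log_bound one_pos (le_of_lt (show (0:ℝ) < x from hx))).1
    simpa using this
  have hL : ∫⁻ x, ENNReal.ofReal (Real.log (1+x)) ∂(expMeasure lD) = ENNReal.ofReal (Eb lD) := by
    have hint : IntegrableOn (fun x => Real.log (1+x) * (lD * Real.exp (-(lD*x)))) (Ioi (0:ℝ)) := by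
      have := log_integrableOn hD one_pos
      simpa using this
    rw [lintegral_ofReal_expMeasure hD hm hnn hint]
    have := log_scaled hD one_pos
    simp only [div_one, mul_one] at this
    rw [this]
  exact integral_of_lintegral hm.aestronglyMeasurable (ae_nonneg_expMeasure hnn)
    (Eb_nonneg hD) hL

lemma underlay {lD lA : ℝ} (hD : 0 < lD) (hA : 0 < lA) :
    Integrable (fun q : ℝ×ℝ => Real.log (1 + q.1/(q.2+1))) ((expMeasure lD).prod (expMeasure lA)) ∧
    ∫ q, Real.log (1 + q.1/(q.2+1)) ∂((expMeasure lD).prod (expMeasure lA))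
      = ∫ t in Ioi (0:ℝ), lA * Real.exp (-(lD*t)) / ((1+t)*(lA+lD*t)) := by
  haveI := isProbabilityMeasure_expMeasure hD
  haveI := isProbabilityMeasure_expMeasure hA
  set J : ℝ := ∫ t in Ioi (0:ℝ), lA * Real.exp (-(lD*t)) / ((1+t)*(lA+lD*t)) with hJdef
  have hJnn : 0 ≤ J := by
    apply setIntegral_nonneg measurableSet_Ioi
    intro t ht
    have ht0 : (0:ℝ) < t := ht
    positivity
  have hm : Measurable (fun q : ℝ×ℝ => Real.log (1 + q.1/(q.2+1))) :=
    Real.measurable_log.comp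
      (measurable_const.add (measurable_fst.div (measurable_snd.add measurable_const)))
  have hnn2 : ∀ q : ℝ×ℝ, 0 < q.1 → 0 < q.2 → 0 ≤ Real.log (1 + q.1/(q.2+1)) := by
    intro q h1 h2
    apply Real.log_nonneg
    have : 0 ≤ q.1 / (q.2+1) := by positivity
    linarith
  have hae : 0 ≤ᵐ[(expMeasure lD).prod (expMeasure lA)]
      (fun q : ℝ×ℝ => Real.log (1 + q.1/(q.2+1))) := by
    rw [Filter.EventuallyLE, ae_iff]
    apply measure_mono_null
      (t := ((Ioi (0:ℝ))ᶜ ×ˢ (univ : Set ℝ)) ∪ ((univ : Set ℝ) ×ˢ (Ioi (0:ℝ))ᶜ))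
    · intro q hq
      simp only [Set.mem_setOf_eq, Pi.zero_apply, not_le] at hq
      by_contra hcon
      simp only [Set.mem_union, Set.mem_prod, Set.mem_compl_iff, Set.mem_Ioi,
        Set.mem_univ, and_true, true_and, not_or, not_not] at hcon
      exact absurd (hnn2 q hcon.1 hcon.2) (not_le.2 hq)
    · apply measure_union_null
      · rw [Measure.prod_prod, expMeasure_compl_Ioi, zero_mul]
      · rw [Measure.prod_prod, expMeasure_compl_Ioi, mul_zero]
  have hL : ∫⁻ q, ENNReal.ofReal (Real.log (1 + q.1/(q.2+1)))
      ∂((expMeasure lD).prod (expMeasure lA)) = ENNReal.ofReal J := by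
    rw [lintegral_prod_symm _ hm.ennreal_ofReal.aemeasurable]
    have step1 : ∀ᵐ z ∂(expMeasure lA),
        (∫⁻ x, ENNReal.ofReal (Real.log (1 + x/(z+1))) ∂(expMeasure lD))
          = ∫⁻ t in Ioi (0:ℝ), ENNReal.ofReal (Real.exp (-(lD*(z+1)*t))/(1+t)) := by
      have hset : ∀ᵐ z ∂(expMeasure lA), z ∈ Ioi (0:ℝ) := by
        rw [ae_iff]
        apply measure_mono_null (t := (Ioi (0:ℝ))ᶜ) (fun z hz => hz) (expMeasure_compl_Ioi lA)
      filter_upwards [hset] with z hz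
      have hz0 : (0:ℝ) < z := hz
      have hz1 : (0:ℝ) < z + 1 := by linarith
      have hds : (0:ℝ) < lD * (z+1) := by positivity
      have hmz : Measurable (fun x : ℝ => Real.log (1 + x/(z+1))) :=
        Real.measurable_log.comp (measurable_const.add (measurable_id.div_const _))
      have hnnz : ∀ x ∈ Ioi (0:ℝ), 0 ≤ Real.log (1 + x/(z+1)) :=
        fun x hx => (log_bound hz1 (le_of_lt (show (0:ℝ) < x from hx))).1
      rw [lintegral_ofReal_expMeasure hD hmz hnnz (log_integrableOn hD hz1),
        log_scaled hD hz1, ← H_eq hds]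
      rw [ofReal_integral_eq_lintegral_ofReal (exp_div_integrableOn hds)
        ((ae_restrict_iff' measurableSet_Ioi).2 (ae_of_all _ (fun t ht => by
          have : (0:ℝ) < t := ht
          positivity)))]
    rw [lintegral_congr_ae step1]
    have hmeas_unc : Measurable (Function.uncurry fun z t =>
        ENNReal.ofReal (Real.exp (-(lD*(z+1)*t))/(1+t)) *
          ENNReal.ofReal (lA * Real.exp (-(lA*z)))) := by
      fun_prop
    have hmeas_outer : Measurable (fun z : ℝ =>
        ∫⁻ t in Ioi (0:ℝ), ENNReal.ofReal (Real.exp (-(lD*(z+1)*t))/(1+t))) := by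
      apply Measurable.lintegral_prod_right
      apply Measurable.ennreal_ofReal
      apply Measurable.div <;> fun_prop
    rw [lintegral_expMeasure hmeas_outer]
    have push : ∀ z ∈ Ioi (0:ℝ),
        (∫⁻ t in Ioi (0:ℝ), ENNReal.ofReal (Real.exp (-(lD*(z+1)*t))/(1+t)))
            * ENNReal.ofReal (lA * Real.exp (-(lA*z)))
          = ∫⁻ t in Ioi (0:ℝ), ENNReal.ofReal (Real.exp (-(lD*(z+1)*t))/(1+t))
            * ENNReal.ofReal (lA * Real.exp (-(lA*z))) := by
      intro z _
      rw [lintegral_mul_const]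
      apply Measurable.ennreal_ofReal
      apply Measurable.div <;> fun_prop
    rw [setLIntegral_congr_fun measurableSet_Ioi push]
    rw [lintegral_lintegral_swap hmeas_unc.aemeasurable]
    have step2 : ∀ t ∈ Ioi (0:ℝ),
        (∫⁻ z in Ioi (0:ℝ), ENNReal.ofReal (Real.exp (-(lD*(z+1)*t))/(1+t))
            * ENNReal.ofReal (lA * Real.exp (-(lA*z))))
          = ENNReal.ofReal (lA * Real.exp (-(lD*t)) / ((1+t)*(lA+lD*t))) := by
      intro t ht
      have ht0 : (0:ℝ) < t := ht
      have h1t : (0:ℝ) < 1 + t := by linarith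
      have hlt : (0:ℝ) < lA + lD*t := by positivity
      have comb : ∀ z ∈ Ioi (0:ℝ),
          ENNReal.ofReal (Real.exp (-(lD*(z+1)*t))/(1+t))
              * ENNReal.ofReal (lA * Real.exp (-(lA*z)))
            = ENNReal.ofReal ((Real.exp (-(lD*t))/(1+t) * lA) * Real.exp (-((lA+lD*t)*z))) := by
        intro z _
        rw [← ENNReal.ofReal_mul (by positivity)]
        congr 1
        rw [show -(lD*(z+1)*t) = -(lD*t) + -(lD*t*z) by ring, Real.exp_add,
          show -((lA+lD*t)*z) = -(lA*z) + -(lD*t*z) by ring, Real.exp_add]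
        ring
      rw [setLIntegral_congr_fun measurableSet_Ioi comb]
      rw [← ofReal_integral_eq_lintegral_ofReal
        ((exp_integrableOn hlt).const_mul _)
        ((ae_restrict_iff' measurableSet_Ioi).2 (ae_of_all _ (fun z hz => by positivity)))]
      rw [integral_const_mul, exp_int_eq hlt]
      congr 1
      field_simp
    rw [setLIntegral_congr_fun measurableSet_Ioi step2]
    rw [← ofReal_integral_eq_lintegral_ofReal (final_integrableOn hD hA)
      ((ae_restrict_iff' measurableSet_Ioi).2 (ae_of_all _ (fun t ht => by
        have ht0 : (0:ℝ) < t := ht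
        positivity)))]
  exact integral_of_lintegral hm.aestronglyMeasurable hae hJnn hL

end Stmt7Aux

open Stmt7Aux in
theorem stmt_7 {Ω : Type*} [MeasurableSpace Ω] (μ : Measure Ω) [IsProbabilityMeasure μ]
    (γD γA : ℝ) (hγD : 0 < γD) (hγA : 0 < γA) (hne : γA ≠ γD)
    (p β : ℝ) (hp : p ∈ Set.Icc (0 : ℝ) 1) (hβ : β ∈ Set.Icc (0 : ℝ) 1)
    (M : Ω → Bool) (X Z : Ω → ℝ)
    (hMm : Measurable M) (hXm : Measurable X) (hZm : Measurable Z)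
    (hM : μ {ω | M ω = true} = ENNReal.ofReal p)
    (hX : Measure.map X μ = expMeasure (1 / γD))
    (hZ : Measure.map Z μ = expMeasure (1 / γA))
    (hindep : iIndepFun (idxDFam M X Z) μ) :
    ∫ ω, (if M ω = true then Real.logb 2 (1 + X ω / (Z ω + 1))
        else (1 - β) * Real.logb 2 (1 + X ω)) ∂μ
      = (1 / Real.log 2) *
          (p * (Psi (1 / γD) - Psi (1 / γA)) / (γA / γD - 1)
            - (1 - p) * (1 - β) * Psi (1 / γD)) := by
  obtain ⟨hp0, hp1⟩ := hp
  set lD : ℝ := 1/γD with hlDdef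
  set lA : ℝ := 1/γA with hlAdef
  have hlD : 0 < lD := by positivity
  have hlA : 0 < lA := by positivity
  have hlne : lA ≠ lD := by
    intro h
    rw [hlAdef, hlDdef, div_eq_div_iff hγA.ne' hγD.ne'] at h
    exact hne (by linarith)
  haveI := isProbabilityMeasure_expMeasure hlD
  haveI := isProbabilityMeasure_expMeasure hlA
  have hg1m : Measurable (fun q : ℝ × ℝ => Real.log (1 + q.1/(q.2+1))) :=
    Real.measurable_log.comp
      (measurable_const.add (measurable_fst.div (measurable_snd.add measurable_const)))
  have hg2m : Measurable (fun x : ℝ => Real.log (1+x)) :=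
    Real.measurable_log.comp (measurable_const.add measurable_id)
  have hTm : Measurable (fun ω => (X ω, Z ω)) := hXm.prodMk hZm
  -- independence facts
  have hfm : ∀ i, Measurable (idxDFam M X Z i) := by
    intro i; cases i
    · exact hMm
    · exact hXm
    · exact hZm
  have hXZ : IndepFun X Z μ :=
    hindep.indepFun (i := IdxD.X) (j := IdxD.Z) (by intro h; exact IdxD.noConfusion h)
  have hmapT : μ.map (fun ω => (X ω, Z ω)) = (expMeasure lD).prod (expMeasure lA) := by
    rw [← hX, ← hZ]
    exact (indepFun_iff_map_prod_eq_prod_map_map hXm.aemeasurable hZm.aemeasurable).1 hXZ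
  have hTM : IndepFun (fun ω => (X ω, Z ω)) M μ :=
    hindep.indepFun_prodMk hfm IdxD.X IdxD.Z IdxD.M
      (by intro h; exact IdxD.noConfusion h) (by intro h; exact IdxD.noConfusion h)
  -- pure integrals
  obtain ⟨ig1, hI1⟩ := underlay hlD hlA
  obtain ⟨ig2, hI2⟩ := overlay hlD
  have hJ1 : (∫ t in Ioi (0:ℝ), lA * Real.exp (-(lD*t)) / ((1+t)*(lA+lD*t)))
      = lA / (lA - lD) * (Eb lD - Eb lA) := final_real hlD hlA hlne
  -- transfer to Ω
  have hg1sm : AEStronglyMeasurable (fun q : ℝ × ℝ => Real.log (1 + q.1/(q.2+1)))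
      (μ.map (fun ω => (X ω, Z ω))) := hg1m.aestronglyMeasurable
  have hg2sm : AEStronglyMeasurable (fun x : ℝ => Real.log (1+x)) (μ.map X) :=
    hg2m.aestronglyMeasurable
  have ig1T : Integrable (fun ω => Real.log (1 + X ω/(Z ω+1))) μ := by
    exact (integrable_map_measure hg1sm hTm.aemeasurable).1 (by rw [hmapT]; exact ig1)
  have ig2X : Integrable (fun ω => Real.log (1 + X ω)) μ := by
    exact (integrable_map_measure hg2sm hXm.aemeasurable).1 (by rw [hX]; exact ig2)
  have hintT : ∫ ω, Real.log (1 + X ω/(Z ω+1)) ∂μ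
      = lA / (lA - lD) * (Eb lD - Eb lA) := by
    have h := integral_map (μ := μ) hTm.aemeasurable hg1sm
    rw [hmapT] at h
    exact h.symm.trans (hI1.trans hJ1)
  have hintX : ∫ ω, Real.log (1 + X ω) ∂μ = Eb lD := by
    have h := integral_map (μ := μ) hXm.aemeasurable hg2sm
    rw [hX] at h
    exact h.symm.trans hI2
  -- the indicator functions of the mode
  have hsmeas : MeasurableSet {ω | M ω = true} := hMm (measurableSet_singleton true)
  have hφm : Measurable (fun ω => if M ω = true then (1:ℝ) else 0) :=
    Measurable.ite hsmeas measurable_const measurable_const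
  have hψm : Measurable (fun ω => if M ω = true then (0:ℝ) else (1-β)) :=
    Measurable.ite hsmeas measurable_const measurable_const
  have hφbd : ∀ ω, ‖if M ω = true then (1:ℝ) else 0‖ ≤ 1 := by
    intro ω; split <;> simp
  have hψbd : ∀ ω, ‖if M ω = true then (0:ℝ) else (1-β)‖ ≤ |1-β| := by
    intro ω; split <;> simp
  have hφint : Integrable (fun ω => if M ω = true then (1:ℝ) else 0) μ :=
    (integrable_const (1:ℝ)).mono' hφm.aestronglyMeasurable (ae_of_all _ hφbd)
  have hψint : Integrable (fun ω => if M ω = true then (0:ℝ) else (1-β)) μ :=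
    (integrable_const |1-β|).mono' hψm.aestronglyMeasurable (ae_of_all _ hψbd)
  have hφeq : ∫ ω, (if M ω = true then (1:ℝ) else 0) ∂μ = p := by
    have he : (fun ω => if M ω = true then (1:ℝ) else 0)
        = Set.indicator {ω | M ω = true} (fun _ => (1:ℝ)) := by
      funext ω
      rw [Set.indicator_apply]
      rfl
    rw [he, integral_indicator_const _ hsmeas, measureReal_def, hM, smul_eq_mul, mul_one,
      ENNReal.toReal_ofReal hp0]
  have hψeq : ∫ ω, (if M ω = true then (0:ℝ) else (1-β)) ∂μ = (1-p) * (1-β) := by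
    have he : (fun ω => if M ω = true then (0:ℝ) else (1-β))
        = Set.indicator {ω | M ω = true}ᶜ (fun _ => (1-β:ℝ)) := by
      funext ω
      rw [Set.indicator_apply]
      by_cases h : M ω = true <;> simp [h]
    rw [he, integral_indicator_const _ hsmeas.compl, measureReal_def, prob_compl_eq_one_sub hsmeas, hM,
      smul_eq_mul]
    congr 1
    rw [← ENNReal.ofReal_one, ← ENNReal.ofReal_sub _ hp0, ENNReal.toReal_ofReal (by linarith)]
  -- independence of the composed functions
  have hind1 : IndepFun (fun ω => if M ω = true then (1:ℝ) else 0)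
      (fun ω => Real.log (1 + X ω/(Z ω+1))) μ := by
    exact (hTM.symm.comp (φ := fun b : Bool => if b = true then (1:ℝ) else 0)
      Measurable.of_discrete hg1m)
  have hind2 : IndepFun (fun ω => if M ω = true then (0:ℝ) else (1-β))
      (fun ω => Real.log (1 + X ω)) μ := by
    exact (hTM.symm.comp (φ := fun b : Bool => if b = true then (0:ℝ) else (1-β))
      Measurable.of_discrete (hg2m.comp measurable_fst))
  have e1 : ∫ ω, (if M ω = true then (1:ℝ) else 0) * Real.log (1 + X ω/(Z ω+1)) ∂μ
      = p * (lA / (lA - lD) * (Eb lD - Eb lA)) := by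
    have h := hind1.integral_fun_mul_eq_mul_integral hφint.1 ig1T.1
    rw [hφeq, hintT] at h
    exact h
  have e2 : ∫ ω, (if M ω = true then (0:ℝ) else (1-β)) * Real.log (1 + X ω) ∂μ
      = ((1-p) * (1-β)) * Eb lD := by
    have h := hind2.integral_fun_mul_eq_mul_integral hψint.1 ig2X.1
    rw [hψeq, hintX] at h
    exact h
  -- split the original integral
  have key : (fun ω => if M ω = true then Real.logb 2 (1 + X ω / (Z ω + 1))
        else (1 - β) * Real.logb 2 (1 + X ω))
      = fun ω => (Real.log 2)⁻¹ *
          ((if M ω = true then (1:ℝ) else 0) * Real.log (1 + X ω/(Z ω+1))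
            + (if M ω = true then (0:ℝ) else (1-β)) * Real.log (1 + X ω)) := by
    funext ω
    by_cases h : M ω = true
    · simp only [if_pos h, Real.logb]; ring
    · simp only [if_neg h, Real.logb]; ring
  rw [key, integral_const_mul, integral_add
    (ig1T.bdd_mul hφm.aestronglyMeasurable (ae_of_all _ hφbd))
    (ig2X.bdd_mul hψm.aestronglyMeasurable (ae_of_all _ hψbd)), e1, e2]
  -- final algebra
  have hPsiD : Psi lD = - Eb lD := rfl
  have hPsiA : Psi lA = - Eb lA := rfl
  have hratio : γA/γD - 1 = (lD - lA)/lA := by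
    rw [hlDdef, hlAdef]
    field_simp
  rw [hPsiD, hPsiA, hratio]
  have h1 : lA - lD ≠ 0 := sub_ne_zero.2 hlne
  have h2 : lD - lA ≠ 0 := sub_ne_zero.2 (Ne.symm hlne)
  have h3 : Real.log 2 ≠ 0 := (Real.log_pos one_lt_two).ne'
  field_simp
  ring
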